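/- Let π_n = N(x_n, C_n) be a Gaussian measure on ℝ^d with mean x_n ∈ ℝ^d and symmetric positive definite covariance C_n ∈ ℝ^{d×d}, and let P_n(x) = N(x_n + √(1−s²)(x − x_n), s² C_n) with s ∈ (0, 1] be the modified preconditioned Crank–Nicolson proposal. Then the π_n-reversible Metropolis–Hastings transition kernel K_n with proposal P_n satisfies K_n = (T_n)_*K with T_n(x) := x_n + C_n^{1/2} x, where K is the Metropolis–Hastings transition kernel targeting the standard Gaussian π = N(0, I_d) with pCN proposal kernel P(x) = N(√(1−s²) x, s² I_d). -/

import Mathlib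

open MeasureTheory ProbabilityTheory Matrix
open scoped ENNReal NNReal

open scoped ComplexOrder in
/-- The positive semidefinite square root of a positive semidefinite matrix (the definition
`Matrix.PosSemidef.sqrt` of the older Mathlib, which has since been removed). -/
noncomputable def Matrix.PosSemidef.sqrt {n 𝕜 : Type*} [Fintype n] [RCLike 𝕜] [DecidableEq n]
    {A : Matrix n n 𝕜} (hA : A.PosSemidef) : Matrix n n 𝕜 :=
  (hA.1.eigenvectorUnitary : Matrix n n 𝕜) * diagonal (((↑) : ℝ → 𝕜) ∘ (√·) ∘ hA.1.eigenvalues) *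
    (star hA.1.eigenvectorUnitary : Matrix n n 𝕜)

/-- The standard Gaussian measure `N(0, I_d)` on `ℝ^d`. -/
noncomputable def stdGaussian (d : ℕ) : Measure (Fin d → ℝ) :=
  Measure.pi fun _ => gaussianReal 0 1

instance (d : ℕ) : IsProbabilityMeasure (stdGaussian d) := by
  unfold _root_.stdGaussian; infer_instance

/-- The Gaussian measure `N(m, C)` on `ℝ^d`, realized as the pushforward of the standard
Gaussian under `x ↦ m + C^{1/2} x` for positive semidefinite `C` (junk value otherwise). -/
noncomputable def gaussian {d : ℕ} (m : Fin d → ℝ) (C : Matrix (Fin d) (Fin d) ℝ) :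
    Measure (Fin d → ℝ) :=
  letI := Classical.propDecidable C.PosSemidef
  if hC : C.PosSemidef then (stdGaussian d).map (fun x => m + hC.sqrt *ᵥ x)
  else Measure.dirac m

instance {d : ℕ} (m : Fin d → ℝ) (C : Matrix (Fin d) (Fin d) ℝ) :
    IsProbabilityMeasure (gaussian m C) := by
  unfold gaussian
  split
  · exact Measure.isProbabilityMeasure_map
      ((continuous_const.add ((continuous_const.matrix_mulVec continuous_id))).measurable.aemeasurable)
  · infer_instance

/-- The random-walk transition kernel: `P(x, ·)` is the law of `x + ξ` with `ξ ∼ μ`. -/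
noncomputable def rwKernel {d : ℕ} (μ : Measure (Fin d → ℝ)) :
    Kernel (Fin d → ℝ) (Fin d → ℝ) :=
  Kernel.map (Kernel.id ×ₖ Kernel.const _ μ) (fun p => p.1 + p.2)

instance {d : ℕ} (μ : Measure (Fin d → ℝ)) [IsProbabilityMeasure μ] :
    IsMarkovKernel (rwKernel μ) :=
  Kernel.IsMarkovKernel.map _ (measurable_fst.add measurable_snd)


/-- The autoregressive (pCN-type) transition kernel: `P(x, ·)` is the law of
`a + b • (x − a) + ξ` with `ξ ∼ μ`. -/
noncomputable def arKernel {d : ℕ} (a : Fin d → ℝ) (b : ℝ) (μ : Measure (Fin d → ℝ)) :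
    Kernel (Fin d → ℝ) (Fin d → ℝ) :=
  Kernel.map (Kernel.id ×ₖ Kernel.const _ μ) (fun p => a + b • (p.1 - a) + p.2)

instance {d : ℕ} (a : Fin d → ℝ) (b : ℝ) (μ : Measure (Fin d → ℝ)) [IsProbabilityMeasure μ] :
    IsMarkovKernel (arKernel a b μ) :=
  Kernel.IsMarkovKernel.map _
    ((measurable_const.add ((measurable_fst.sub measurable_const).const_smul b)).add
      measurable_snd)

/-- The Metropolis–Hastings acceptance probability `α_P(x, x') := min{1, dν_P^⊤/dν_P (x, x')}`,
where `ν_P(dx dx') := P(x, dx') π(dx)` and `ν_P^⊤` is its swap. -/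
noncomputable def mhAccept {E : Type*} [MeasurableSpace E] (π : Measure E) (P : Kernel E E) :
    E × E → ℝ≥0∞ :=
  fun p => min 1 (((π ⊗ₘ P).map Prod.swap).rnDeriv (π ⊗ₘ P) p)

/-- The Metropolis–Hastings transition kernel with target `π` and proposal `P`:
`K(x, dx') = α_P(x, x') P(x, dx') + r(x) δ_x(dx')`. -/
noncomputable def mhKernel {E : Type*} [MeasurableSpace E] (π : Measure E) (P : Kernel E E)
    [IsSFiniteKernel P] : Kernel E E :=
  P.withDensity (fun x y => mhAccept π P (x, y)) +
    (Kernel.id).withDensity (fun x _ => ∫⁻ y, (1 - mhAccept π P (x, y)) ∂(P x))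

/-! ### Auxiliary lemmas -/

lemma measurable_mhAccept {E : Type*} [MeasurableSpace E] (π : Measure E) (P : Kernel E E) :
    Measurable (mhAccept π P) :=
  measurable_const.min (Measure.measurable_rnDeriv _ _)

lemma withDensity_map_equiv {E F : Type*} [MeasurableSpace E] [MeasurableSpace F]
    (e : E ≃ᵐ F) (μ : Measure E) {f : F → ℝ≥0∞} (hf : Measurable f) :
    (μ.map e).withDensity f = (μ.withDensity (fun x => f (e x))).map e := by
  ext s hs
  rw [Measure.map_apply e.measurable hs, withDensity_apply _ hs,
    withDensity_apply _ (e.measurable hs), setLIntegral_map hs hf e.measurable]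

/-- Equivariance of the Metropolis–Hastings kernel under a measurable isomorphism:
if the target and the proposal are pushed forward by `e`, then so is the MH kernel. -/
lemma mh_pushforward {E F : Type*} [MeasurableSpace E] [MeasurableSpace F] (e : E ≃ᵐ F)
    (π : Measure E) [IsProbabilityMeasure π]
    (P : Kernel E E) [IsMarkovKernel P] (Q : Kernel F F) [IsMarkovKernel Q]
    (hQ : ∀ x, Q (e x) = (P x).map e) :
    ∀ᵐ y ∂(π.map e), mhKernel (π.map e) Q y = (mhKernel π P (e.symm y)).map e := by
  have hπn : IsProbabilityMeasure (π.map e) :=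
    Measure.isProbabilityMeasure_map e.measurable.aemeasurable
  set πn := π.map e with hπndef
  set ν := π ⊗ₘ P with hν
  set νn := πn ⊗ₘ Q with hνn
  let em : E × E ≃ᵐ F × F := e.prodCongr e
  -- Step 1: the joint proposal measure is pushed forward by `em = e × e`
  have h1 : νn = ν.map em := by
    ext s hs
    rw [hνn, Measure.compProd_apply hs, hπndef,
      lintegral_map (Kernel.measurable_kernel_prodMk_left hs) e.measurable,
      Measure.map_apply em.measurable hs, hν, Measure.compProd_apply (em.measurable hs)]
    refine lintegral_congr fun x => ?_
    rw [hQ x, Measure.map_apply e.measurable (measurable_prodMk_left hs)]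
    rfl
  -- Step 2: same for the swapped joint measure
  have h2 : νn.map Prod.swap = (ν.map Prod.swap).map em := by
    rw [h1, Measure.map_map measurable_swap em.measurable,
      Measure.map_map em.measurable measurable_swap]
    rfl
  -- Step 3: the acceptance probability is equivariant a.e.
  have h3 : ∀ᵐ p ∂ν, mhAccept πn Q (em p) = mhAccept π P p := by
    have hsf2 : IsProbabilityMeasure (ν.map Prod.swap) :=
      Measure.isProbabilityMeasure_map measurable_swap.aemeasurable
    have := em.measurableEmbedding.rnDeriv_map (ν.map Prod.swap) ν
    filter_upwards [this] with p hp
    simp only [mhAccept, ← h1, ← h2] at hp ⊢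
    rw [hp]
  -- Step 4
  have h4 : ∀ᵐ x ∂π, ∀ᵐ x' ∂(P x), mhAccept πn Q (e x, e x') = mhAccept π P (x, x') :=
    Measure.ae_ae_of_ae_compProd h3
  -- Step 5: conclude
  rw [hπndef, e.measurableEmbedding.ae_map_iff]
  filter_upwards [h4] with x hx
  rw [e.symm_apply_apply]
  -- measurability facts
  have hmQ : Measurable (Function.uncurry fun y y' => mhAccept πn Q (y, y')) := by
    exact measurable_mhAccept πn Q
  have hmP : Measurable (Function.uncurry fun y y' => mhAccept π P (y, y')) := by
    exact measurable_mhAccept π P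
  have hrQ : Measurable fun y => ∫⁻ y', (1 - mhAccept πn Q (y, y')) ∂(Q y) :=
    Measurable.lintegral_kernel_prod_right'
      (measurable_const.sub (measurable_mhAccept πn Q))
  have hrP : Measurable fun y => ∫⁻ y', (1 - mhAccept π P (y, y')) ∂(P y) :=
    Measurable.lintegral_kernel_prod_right'
      (measurable_const.sub (measurable_mhAccept π P))
  have hmQ2 : Measurable (Function.uncurry fun y (_ : F) =>
      ∫⁻ y', (1 - mhAccept πn Q (y, y')) ∂(Q y)) := by
    exact hrQ.comp measurable_fst
  have hmP2 : Measurable (Function.uncurry fun y (_ : E) =>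
      ∫⁻ y', (1 - mhAccept π P (y, y')) ∂(P y)) := by
    exact hrP.comp measurable_fst
  -- the rejection mass transforms
  have hr : (∫⁻ y', (1 - mhAccept πn Q (e x, y')) ∂(Q (e x)))
      = ∫⁻ x', (1 - mhAccept π P (x, x')) ∂(P x) := by
    have hint : Measurable fun y' => (1 : ℝ≥0∞) - mhAccept πn Q (e x, y') :=
      measurable_const.sub ((measurable_mhAccept πn Q).comp measurable_prodMk_left)
    rw [hQ x, lintegral_map hint e.measurable]
    refine lintegral_congr_ae ?_
    filter_upwards [hx] with x' hx'
    rw [hx']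
  -- the accepted part transforms
  have hacc : (Q (e x)).withDensity (fun y' => mhAccept πn Q (e x, y'))
      = ((P x).withDensity (fun x' => mhAccept π P (x, x'))).map e := by
    have hd : Measurable fun y' => mhAccept πn Q (e x, y') :=
      (measurable_mhAccept πn Q).comp measurable_prodMk_left
    rw [hQ x, withDensity_map_equiv e (P x) hd]
    congr 1
    exact withDensity_congr_ae hx
  rw [mhKernel, mhKernel, Kernel.add_apply, Kernel.add_apply,
    Measure.map_add _ _ e.measurable,
    Kernel.withDensity_apply Q hmQ, Kernel.withDensity_apply P hmP,
    Kernel.withDensity_apply _ hmQ2, Kernel.withDensity_apply _ hmP2,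
    Kernel.id_apply, Kernel.id_apply, withDensity_const, withDensity_const,
    Measure.map_smul, Measure.map_dirac' e.measurable, hr, hacc]

lemma gaussian_eq_map {d : ℕ} (m : Fin d → ℝ) {C : Matrix (Fin d) (Fin d) ℝ}
    (hC : C.PosSemidef) :
    gaussian m C = (stdGaussian d).map (fun x => m + hC.sqrt *ᵥ x) := by
  rw [gaussian]; exact dif_pos hC

lemma Matrix.PosSemidef.sqrt_eq_cfc {n : Type*} [Fintype n] [DecidableEq n] {A : Matrix n n ℝ}
    (hA : A.PosSemidef) : hA.sqrt = cfc Real.sqrt A := by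
  rw [hA.1.cfc_eq]; rfl

lemma Matrix.PosSemidef.sq_sqrt {n : Type*} [Fintype n] [DecidableEq n] {A : Matrix n n ℝ}
    (hA : A.PosSemidef) : hA.sqrt ^ 2 = A := by
  rw [hA.sqrt_eq_cfc]
  refine (cfc_pow Real.sqrt 2 A Real.continuous_sqrt.continuousOn (hA.1 : IsSelfAdjoint A)).symm.trans
    ((cfc_congr fun x hx => ?_).trans (cfc_id ℝ A (hA.1 : IsSelfAdjoint A)))
  rw [hA.1.spectrum_real_eq_range_eigenvalues] at hx
  obtain ⟨i, rfl⟩ := hx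
  exact Real.sq_sqrt (hA.eigenvalues_nonneg i)

lemma sqrt_one' {d : ℕ} : (Matrix.PosSemidef.one (n := Fin d) (R := ℝ)).sqrt = 1 := by
  rw [Matrix.PosSemidef.sqrt_eq_cfc]
  simpa using cfc_algebraMap (A := Matrix (Fin d) (Fin d) ℝ) (1 : ℝ) Real.sqrt

lemma gaussian_zero_one {d : ℕ} : gaussian (0 : Fin d → ℝ) 1 = stdGaussian d := by
  rw [gaussian_eq_map 0 Matrix.PosSemidef.one]
  have : (fun x : Fin d → ℝ => 0 + (Matrix.PosSemidef.one (n := Fin d) (R := ℝ)).sqrt *ᵥ x)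
      = id := by
    funext x; simp [sqrt_one']
  rw [this, Measure.map_id]

lemma posSemidef_smul {n : Type*} [Fintype n] {A : Matrix n n ℝ} (hA : A.PosSemidef)
    {c : ℝ} (hc : 0 ≤ c) : (c • A).PosSemidef := by
  exact hA.smul hc

lemma sqrt_smul' {n : Type*} [Fintype n] [DecidableEq n] {A : Matrix n n ℝ} (hA : A.PosSemidef)
    {c : ℝ} (hc : 0 ≤ c) (h2 : ((c ^ 2) • A).PosSemidef) :
    h2.sqrt = c • hA.sqrt := by
  rw [h2.sqrt_eq_cfc, hA.sqrt_eq_cfc]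
  refine (cfc_comp_smul (c ^ 2) Real.sqrt A Real.continuous_sqrt.continuousOn
    (hA.1 : IsSelfAdjoint A)).symm.trans
    ((cfc_congr fun x _ => ?_).trans (cfc_smul c Real.sqrt A Real.continuous_sqrt.continuousOn))
  simp only [smul_eq_mul]
  rw [Real.sqrt_mul (sq_nonneg c), Real.sqrt_sq hc]

lemma arKernel_apply {d : ℕ} (a : Fin d → ℝ) (b : ℝ) (μ : Measure (Fin d → ℝ))
    [IsProbabilityMeasure μ] (x : Fin d → ℝ) :
    arKernel a b μ x = μ.map (fun ξ => a + b • (x - a) + ξ) := by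
  have hm : Measurable fun p : (Fin d → ℝ) × (Fin d → ℝ) => a + b • (p.1 - a) + p.2 :=
    (measurable_const.add ((measurable_fst.sub measurable_const).const_smul b)).add
      measurable_snd
  rw [arKernel, Kernel.map_apply _ hm, Kernel.prod_apply, Kernel.id_apply, Kernel.const_apply,
    Measure.dirac_prod, Measure.map_map hm measurable_prodMk_left]
  rfl

lemma gaussian_smul_map {d : ℕ} {C : Matrix (Fin d) (Fin d) ℝ} (hC : C.PosSemidef)
    {s : ℝ} (hs : 0 ≤ s) :
    gaussian (0 : Fin d → ℝ) (s ^ 2 • C)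
      = (gaussian (0 : Fin d → ℝ) (s ^ 2 • (1 : Matrix (Fin d) (Fin d) ℝ))).map
          (fun x => hC.sqrt *ᵥ x) := by
  have hC2 : (s ^ 2 • C).PosSemidef := posSemidef_smul hC (sq_nonneg s)
  have h12 : (s ^ 2 • (1 : Matrix (Fin d) (Fin d) ℝ)).PosSemidef :=
    posSemidef_smul Matrix.PosSemidef.one (sq_nonneg s)
  have hmS : Measurable fun x : Fin d → ℝ => hC.sqrt *ᵥ x :=
    (continuous_const.matrix_mulVec continuous_id).measurable
  have hm2 : Measurable fun x : Fin d → ℝ => 0 + h12.sqrt *ᵥ x :=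
    (continuous_const.add (continuous_const.matrix_mulVec continuous_id)).measurable
  rw [gaussian_eq_map 0 hC2, gaussian_eq_map 0 h12, Measure.map_map hmS hm2]
  congr 1
  funext x
  simp only [Function.comp_apply, zero_add, sqrt_smul' hC hs hC2,
    sqrt_smul' Matrix.PosSemidef.one hs h12, sqrt_one']
  rw [smul_mulVec, smul_mulVec, one_mulVec, mulVec_smul]

/-- For the Gaussian target `π_n = N(x_n, C_n)` and the modified preconditioned
Crank–Nicolson proposal `P_n(x) = N(x_n + √(1−s²)(x − x_n), s²C_n)`, the `π_n`-reversible MH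
kernel `K_n` is the pushforward `(T_n)_*K` of the MH kernel `K` targeting `N(0, I_d)` with pCN
proposal `N(√(1−s²)x, s²I_d)` under the bijection `T_n(x) = x_n + C_n^{1/2} x`, i.e. (a.e.)
`K_n(y, ·) = K(T_n⁻¹ y, T_n⁻¹ ·)`. -/
theorem mhKernel_gaussian_pcn_pushforward
    {d : ℕ} (xn : Fin d → ℝ) (C : Matrix (Fin d) (Fin d) ℝ) (hC : C.PosDef)
    (s : ℝ) (hs : 0 < s) (hs1 : s ≤ 1) :
    ∀ᵐ y ∂(gaussian xn C),
      mhKernel (gaussian xn C)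
          (arKernel xn (Real.sqrt (1 - s ^ 2)) (gaussian 0 (s ^ 2 • C))) y
        = (mhKernel (gaussian 0 1)
              (arKernel 0 (Real.sqrt (1 - s ^ 2))
                (gaussian 0 (s ^ 2 • (1 : Matrix (Fin d) (Fin d) ℝ))))
            ((hC.posSemidef.sqrt)⁻¹ *ᵥ (y - xn))).map
            (fun x => xn + hC.posSemidef.sqrt *ᵥ x) := by
  set b := Real.sqrt (1 - s ^ 2) with hbdef
  set S := hC.posSemidef.sqrt with hSdef
  have hdet : IsUnit S.det := by
    have h2 : S.det ^ 2 = C.det := by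
      rw [← det_pow, hC.posSemidef.sq_sqrt]
    refine isUnit_iff_ne_zero.mpr fun h => (ne_of_gt hC.det_pos) ?_
    rw [← h2, h]
    norm_num
  have hinv : S⁻¹ * S = 1 := nonsing_inv_mul S hdet
  have hinv' : S * S⁻¹ = 1 := mul_nonsing_inv S hdet
  let Th : Homeomorph (Fin d → ℝ) (Fin d → ℝ) :=
  { toFun := fun x => xn + S *ᵥ x
    invFun := fun y => S⁻¹ *ᵥ (y - xn)
    left_inv := fun x => by
      simp only [add_sub_cancel_left, mulVec_mulVec, hinv, one_mulVec]
    right_inv := fun y => by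
      simp only [mulVec_mulVec, hinv', one_mulVec, add_sub_cancel]
    continuous_toFun := continuous_const.add (continuous_const.matrix_mulVec continuous_id)
    continuous_invFun := continuous_const.matrix_mulVec (continuous_id.sub continuous_const) }
  let e : (Fin d → ℝ) ≃ᵐ (Fin d → ℝ) := Th.toMeasurableEquiv
  have hcoe : ⇑e = fun x => xn + S *ᵥ x := rfl
  have hmS : Measurable fun x : Fin d → ℝ => S *ᵥ x :=
    (continuous_const.matrix_mulVec continuous_id).measurable
  have hQ : ∀ x, arKernel xn b (gaussian 0 (s ^ 2 • C)) (e x)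
      = (arKernel 0 b (gaussian 0 (s ^ 2 • (1 : Matrix (Fin d) (Fin d) ℝ))) x).map e := by
    intro x
    have hmf : Measurable fun ξ : Fin d → ℝ => xn + b • ((e x : Fin d → ℝ) - xn) + ξ :=
      measurable_const.add measurable_id
    have hmg : Measurable fun ξ : Fin d → ℝ => 0 + b • (x - 0) + ξ :=
      measurable_const.add measurable_id
    rw [arKernel_apply, arKernel_apply, gaussian_smul_map hC.posSemidef hs.le,
      Measure.map_map hmf hmS, Measure.map_map e.measurable hmg]
    congr 1
    funext ξ
    show xn + b • ((xn + S *ᵥ x) - xn) + S *ᵥ ξ = xn + S *ᵥ (0 + b • (x - 0) + ξ)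
    rw [add_sub_cancel_left, zero_add, sub_zero, mulVec_add, mulVec_smul, add_assoc]
  have hπ : gaussian xn C = (stdGaussian d).map e := by
    rw [hcoe]
    exact gaussian_eq_map xn hC.posSemidef
  rw [hπ, gaussian_zero_one]
  have H := mh_pushforward e (stdGaussian d)
    (arKernel 0 b (gaussian 0 (s ^ 2 • (1 : Matrix (Fin d) (Fin d) ℝ))))
    (arKernel xn b (gaussian 0 (s ^ 2 • C))) hQ
  exact H
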